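/- Let T be a rooted tree whose root r has exactly one child, and let T₁ be the subtree rooted at that child. Then s(T) = 1 + s(T₁) and t(T) = 1 + s(T₁) + t(T₁), and consequently Δ(T) = Δ(T₁) + t(T₁)/(s(T₁)(1 + s(T₁))) ≥ Δ(T₁) + 1/(1 + s(T₁)). -/

import Mathlib

open scoped Classical
open SimpleGraph

/-- The subtrees (nonempty connected induced subgraphs) of a graph, as vertex sets. -/
noncomputable def subtrees {V : Type*} [Fintype V] (G : SimpleGraph V) :
    Finset (Finset V) :=
  Finset.univ.filter (fun s => s.Nonempty ∧ (G.induce (s : Set V)).Connected)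

/-- The subtrees of a graph containing a fixed vertex `r`. -/
noncomputable def subtreesThrough {V : Type*} [Fintype V] (G : SimpleGraph V) (r : V) :
    Finset (Finset V) :=
  Finset.univ.filter (fun s => r ∈ s ∧ (G.induce (s : Set V)).Connected)

section Aux
variable {V : Type*} {G : SimpleGraph V}

/-- Walk surgery: if `r`'s only neighbor is `c`, any walk in `induce S` between
vertices different from `r` yields reachability in `induce (S \ {r})`. -/
lemma reach_aux (r c : V) (huniq : ∀ u : V, G.Adj r u → u = c) (S : Set V) :
    ∀ n : ℕ, ∀ u v : S, ∀ w : (G.induce S).Walk u v, w.length = n →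
      ∀ (hu : u.1 ≠ r) (hv : v.1 ≠ r),
      (G.induce (S \ {r})).Reachable ⟨u.1, ⟨u.2, hu⟩⟩ ⟨v.1, ⟨v.2, hv⟩⟩ := by
  intro n
  induction n using Nat.strong_induction_on with
  | _ n ih =>
    intro u v w hlen hu hv
    cases w with
    | nil => exact Reachable.refl _
    | @cons _ b _ h p =>
      by_cases hb : b.1 = r
      · -- u must equal c, and the next step must come back to u
        cases p with
        | nil => exact absurd hb hv
        | @cons _ b2 _ h2 q =>
          have h2' : G.Adj r b2.1 := by
            have := h2; rw [SimpleGraph.comap_adj] at this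
            simpa [hb] using this
          have hu' : G.Adj r u.1 := by
            have := h; rw [SimpleGraph.comap_adj] at this
            exact (by simpa [hb] using this.symm)
          have hbu : b2 = u := Subtype.ext ((huniq _ h2').trans (huniq _ hu').symm)
          subst hbu
          have hlt : q.length < n := by
            simp only [SimpleGraph.Walk.length_cons] at hlen; omega
          exact ih q.length hlt b2 v q rfl hu hv
      · have hadj : (G.induce (S \ {r})).Adj ⟨u.1, ⟨u.2, hu⟩⟩ ⟨b.1, ⟨b.2, hb⟩⟩ := by
          rw [SimpleGraph.comap_adj] at h ⊢
          exact h
        have hlt : p.length < n := by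
          simp only [SimpleGraph.Walk.length_cons] at hlen; omega
        exact hadj.reachable.trans (ih p.length hlt b v p rfl hb hv)

end Aux

/-- Let `T` be a tree rooted at `r`, where `r` has exactly one child `c`, and let `T₁`
be the subtree rooted at `c` (i.e. `T − r`). Then `s(T) = 1 + s(T₁)`,
`t(T) = 1 + s(T₁) + t(T₁)`, and the defects satisfy
`Δ(T) = Δ(T₁) + t(T₁)/(s(T₁)(1 + s(T₁))) ≥ Δ(T₁) + 1/(1 + s(T₁))`. -/
theorem stmt6 {V : Type*} [Fintype V] (G : SimpleGraph V) (hG : G.IsTree) (r c : V)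
    (hc : G.Adj r c) (huniq : ∀ u : V, G.Adj r u → u = c)
    (s1 : Finset (Finset V))
    (hs1 : s1 = Finset.univ.filter
      (fun s : Finset V => c ∈ s ∧ r ∉ s ∧ (G.induce (s : Set V)).Connected)) :
    (subtreesThrough G r).card = 1 + s1.card ∧
    (∑ s ∈ subtreesThrough G r, s.card) = 1 + s1.card + ∑ s ∈ s1, s.card ∧
    (Fintype.card V : ℝ) -
        (∑ s ∈ subtreesThrough G r, (s.card : ℝ)) / (subtreesThrough G r).card =
      (((Fintype.card V : ℝ) - 1) - (∑ s ∈ s1, (s.card : ℝ)) / s1.card) +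
        (∑ s ∈ s1, (s.card : ℝ)) / (s1.card * (1 + s1.card)) ∧
    (((Fintype.card V : ℝ) - 1) - (∑ s ∈ s1, (s.card : ℝ)) / s1.card) +
        1 / (1 + (s1.card : ℝ)) ≤
      (Fintype.card V : ℝ) -
        (∑ s ∈ subtreesThrough G r, (s.card : ℝ)) / (subtreesThrough G r).card := by
  have hrc : r ≠ c := G.ne_of_adj hc
  -- membership criteria
  have hmem1 : ∀ s : Finset V, s ∈ s1 ↔
      c ∈ s ∧ r ∉ s ∧ (G.induce (s : Set V)).Connected := by
    intro s; rw [hs1]; simp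
  have hmemT : ∀ s : Finset V, s ∈ subtreesThrough G r ↔
      r ∈ s ∧ (G.induce (s : Set V)).Connected := by
    intro s; rw [subtreesThrough]; simp
  -- key set equality
  have hkey : subtreesThrough G r = insert {r} (s1.image (insert r ·)) := by
    ext S
    rw [hmemT, Finset.mem_insert, Finset.mem_image]
    constructor
    · rintro ⟨hrS, hconn⟩
      by_cases hSr : S = {r}
      · exact Or.inl hSr
      · right
        -- S has a vertex other than r
        obtain ⟨x, hxS, hxr⟩ : ∃ x ∈ S, x ≠ r := by
          by_contra hx
          push_neg at hx
          exact hSr (Finset.eq_singleton_iff_unique_mem.mpr ⟨hrS, hx⟩)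
        -- c ∈ S : first step of a walk from r to x
        have hcS : c ∈ S := by
          obtain ⟨w⟩ := hconn ⟨r, hrS⟩ ⟨x, hxS⟩
          cases w with
          | nil => exact absurd rfl hxr
          | @cons _ b _ h p =>
            have : G.Adj r b.1 := by rw [SimpleGraph.comap_adj] at h; exact h
            have := huniq _ this
            exact this ▸ b.2
        refine ⟨S.erase r, ?_, Finset.insert_erase hrS⟩
        rw [hmem1]
        refine ⟨Finset.mem_erase.mpr ⟨hrc.symm, hcS⟩, Finset.notMem_erase _ _, ?_⟩
        have hcoe : ((S.erase r : Finset V) : Set V) = (S : Set V) \ {r} := by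
          ext y; simp [Finset.mem_erase, and_comm]
        rw [hcoe, SimpleGraph.connected_iff]
        constructor
        · rintro ⟨u, hu⟩ ⟨v, hv⟩
          obtain ⟨w⟩ := hconn ⟨u, hu.1⟩ ⟨v, hv.1⟩
          have := reach_aux r c huniq (S : Set V) w.length ⟨u, hu.1⟩ ⟨v, hv.1⟩ w rfl
            hu.2 hv.2
          exact this
        · exact ⟨⟨c, by simpa using ⟨hcS, hrc.symm⟩⟩⟩
    · rintro (rfl | ⟨s, hs, rfl⟩)
      · refine ⟨Finset.mem_singleton_self r, ?_⟩
        rw [SimpleGraph.connected_iff]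
        constructor
        · rintro ⟨u, hu⟩ ⟨v, hv⟩
          have : u = v := by
            simp only [Finset.coe_singleton, Set.mem_singleton_iff] at hu hv
            rw [hu, hv]
          exact this ▸ Reachable.refl _
        · exact ⟨⟨r, by simp⟩⟩
      · rw [hmem1] at hs
        obtain ⟨hcs, hrs, hconn⟩ := hs
        refine ⟨Finset.mem_insert_self r s, ?_⟩
        have hsub : (s : Set V) ⊆ ((insert r s : Finset V) : Set V) := by
          intro y hy; simp only [Finset.coe_insert, Set.mem_insert_iff]
          exact Or.inr hy
        have hreach : ∀ y : ((insert r s : Finset V) : Set V),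
            (G.induce ((insert r s : Finset V) : Set V)).Reachable y
              ⟨c, hsub hcs⟩ := by
          rintro ⟨y, hy⟩
          rcases Finset.mem_insert.mp (by exact_mod_cast hy) with hyr | hys
          · have : (G.induce ((insert r s : Finset V) : Set V)).Adj
                ⟨y, hy⟩ ⟨c, hsub hcs⟩ := by
              subst hyr; rw [SimpleGraph.comap_adj]; exact hc
            exact this.reachable
          · have := hconn ⟨y, hys⟩ ⟨c, hcs⟩
            exact this.map (G.induceHomOfLE hsub).toHom
        rw [SimpleGraph.connected_iff]
        constructor
        · intro a b; exact (hreach a).trans (hreach b).symm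
        · exact ⟨⟨r, by simp⟩⟩
  -- injectivity and non-membership for counting
  have hinj : Set.InjOn (insert r ·) (s1 : Set (Finset V)) := by
    intro a ha b hb hab
    have hra : r ∉ a := ((hmem1 a).mp (Finset.mem_coe.mp ha)).2.1
    have hrb : r ∉ b := ((hmem1 b).mp (Finset.mem_coe.mp hb)).2.1
    have := congrArg (Finset.erase · r) hab
    simpa [Finset.erase_insert hra, Finset.erase_insert hrb] using this
  have hnm : ({r} : Finset V) ∉ s1.image (insert r ·) := by
    rw [Finset.mem_image]
    rintro ⟨s, hs, hins⟩
    have hcs : c ∈ s := ((hmem1 s).mp hs).1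
    have : c ∈ ({r} : Finset V) := hins ▸ Finset.mem_insert_of_mem hcs
    exact hrc.symm (Finset.mem_singleton.mp this)
  have hcard : (subtreesThrough G r).card = 1 + s1.card := by
    rw [hkey, Finset.card_insert_of_notMem hnm, Finset.card_image_of_injOn hinj]
    omega
  have hsum : (∑ s ∈ subtreesThrough G r, s.card) = 1 + s1.card + ∑ s ∈ s1, s.card := by
    rw [hkey, Finset.sum_insert hnm, Finset.sum_image (fun a ha b hb h => hinj (Finset.mem_coe.mpr ha) (Finset.mem_coe.mpr hb) h)]
    have : ∑ s ∈ s1, (insert r s).card = ∑ s ∈ s1, (s.card + 1) := by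
      refine Finset.sum_congr rfl fun s hs => ?_
      rw [Finset.card_insert_of_notMem ((hmem1 s).mp hs).2.1]
    rw [this, Finset.sum_add_distrib, Finset.sum_const, smul_eq_mul, mul_one,
      Finset.card_singleton]
    omega
  -- s1 is nonempty: {c} ∈ s1
  have hcmem : ({c} : Finset V) ∈ s1 := by
    rw [hmem1]
    refine ⟨Finset.mem_singleton_self c, by simp [hrc], ?_⟩
    rw [SimpleGraph.connected_iff]
    refine ⟨?_, ⟨⟨c, by simp⟩⟩⟩
    rintro ⟨u, hu⟩ ⟨v, hv⟩
    have : u = v := by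
      simp only [Finset.coe_singleton, Set.mem_singleton_iff] at hu hv
      rw [hu, hv]
    exact this ▸ Reachable.refl _
  have hn1 : 1 ≤ s1.card := Finset.card_pos.mpr ⟨_, hcmem⟩
  have hTn : (s1.card : ℕ) ≤ ∑ s ∈ s1, s.card := by
    calc s1.card = ∑ _s ∈ s1, 1 := by simp
    _ ≤ ∑ s ∈ s1, s.card := Finset.sum_le_sum fun s hs =>
        Finset.card_pos.mpr ⟨c, ((hmem1 s).mp hs).1⟩
  -- arithmetic
  set n : ℝ := (s1.card : ℝ) with hn
  set T : ℝ := (∑ s ∈ s1, (s.card : ℝ)) with hT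
  have hn0 : (0:ℝ) < n := by rw [hn]; exact_mod_cast hn1
  have hn1' : (0:ℝ) < 1 + n := by linarith
  have hTn' : n ≤ T := by
    rw [hn, hT]; push_cast; exact_mod_cast hTn
  have hsum' : (∑ s ∈ subtreesThrough G r, (s.card : ℝ)) = 1 + n + T := by
    rw [hn, hT]; exact_mod_cast hsum
  have hcard' : ((subtreesThrough G r).card : ℝ) = 1 + n := by
    rw [hn]; exact_mod_cast hcard
  have heq : (Fintype.card V : ℝ) -
        (∑ s ∈ subtreesThrough G r, (s.card : ℝ)) / (subtreesThrough G r).card =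
      (((Fintype.card V : ℝ) - 1) - T / n) + T / (n * (1 + n)) := by
    rw [hsum', hcard']
    field_simp
    ring
  refine ⟨hcard, hsum, heq, ?_⟩
  rw [heq]
  have : 1 / (1 + n) ≤ T / (n * (1 + n)) := by
    rw [div_le_div_iff₀ hn1' (by positivity)]
    nlinarith
  linarith
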